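/- (First variation formula) Let a, b ∈ I with a < b. Under the standing regularity assumptions, for every admissible y ∈ 𝔼 and every admissible variation h ∈ 𝔼, the function φ(ε) := ℒ[y + εh] is differentiable at ε = 0 and δℒ[y,h] := φ′(0) = ∫_{a}^{b} [ ∂₂f(t, y(qt+ω), D_{q,ω}y(t))·h(qt+ω) + ∂₃f(t, y(qt+ω), D_{q,ω}y(t))·D_{q,ω}h(t) ] d_{q,ω}t. -/

import Mathlib

open Filter Topology

noncomputable section

/-- The fixed point `ω₀ := ω/(1-q)` of `t ↦ qt + ω`. -/
def hahnOmega0 (q ω : ℝ) : ℝ := ω / (1 - q)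

/-- The Hahn difference operator `D_{q,ω}`:
`D_{q,ω}f(t) = (f(qt+ω) - f t)/((qt+ω) - t)` for `t ≠ ω₀`, and the ordinary
derivative at `t = ω₀`. -/
def hahnDeriv (q ω : ℝ) (f : ℝ → ℝ) (t : ℝ) : ℝ :=
  if t = hahnOmega0 q ω then deriv f t
  else (f (q * t + ω) - f t) / ((q * t + ω) - t)

/-- `f` is `q,ω`-differentiable at `t` (automatic off `ω₀`; at `ω₀` it means
ordinary (Fréchet) differentiability). -/
def HahnDiffAt (q ω : ℝ) (f : ℝ → ℝ) (t : ℝ) : Prop :=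
  t = hahnOmega0 q ω → DifferentiableAt ℝ f t

/-- The point `x q^k + [k]_{q,ω}` where `[k]_{q,ω} = ω(1-q^k)/(1-q)`. -/
def jnPoint (q ω x : ℝ) (k : ℕ) : ℝ := x * q ^ k + ω * (1 - q ^ k) / (1 - q)

/-- Partial sums of the Jackson–Nörlund series at `x`. -/
def jnPartial (q ω : ℝ) (f : ℝ → ℝ) (x : ℝ) (n : ℕ) : ℝ :=
  ∑ k ∈ Finset.range n, q ^ k * f (jnPoint q ω x k)

/-- Convergence of the Jackson–Nörlund series `Σ q^k f(x q^k + [k]_{q,ω})`. -/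
def JNConvergesAt (q ω : ℝ) (f : ℝ → ℝ) (x : ℝ) : Prop :=
  ∃ S : ℝ, Tendsto (jnPartial q ω f x) atTop (𝓝 S)

/-- The Jackson–Nörlund integral `∫_{ω₀}^{x} f(t) d_{q,ω}t`. -/
def jnSum (q ω : ℝ) (f : ℝ → ℝ) (x : ℝ) : ℝ :=
  (x * (1 - q) - ω) * limUnder atTop (jnPartial q ω f x)

/-- The Jackson–Nörlund integral `∫_{a}^{b} f(t) d_{q,ω}t`. -/
def jnIntegral (q ω : ℝ) (f : ℝ → ℝ) (a b : ℝ) : ℝ :=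
  jnSum q ω f b - jnSum q ω f a

/-- The orbit `{q^n s + [n]_{q,ω} : n ∈ ℕ}`. -/
def qwOrbit (q ω s : ℝ) : Set ℝ := Set.range (jnPoint q ω s)

/-- The orbit together with `ω₀`, i.e. `[s]_{q,ω}`. -/
def qwClosedOrbit (q ω s : ℝ) : Set ℝ := qwOrbit q ω s ∪ {hahnOmega0 q ω}

/-- The `q,ω`-interval `[a,b]_{q,ω}`. -/
def qwInterval (q ω a b : ℝ) : Set ℝ :=
  qwOrbit q ω a ∪ qwOrbit q ω b ∪ {hahnOmega0 q ω}

/-- `g(t,·)` is differentiable at `θ₀`, uniformly in `t ∈ S`, with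
partial derivative `g' t = ∂₂g(t,θ₀)`. -/
def UnifDiffAt (g : ℝ → ℝ → ℝ) (S : Set ℝ) (θ₀ : ℝ) (g' : ℝ → ℝ) : Prop :=
  (∀ t ∈ S, HasDerivAt (g t) (g' t) θ₀) ∧
  ∀ ε > 0, ∃ δ > 0, ∀ θ : ℝ, 0 < |θ - θ₀| → |θ - θ₀| < δ →
    ∀ t ∈ S, |(g t θ - g t θ₀) / (θ - θ₀) - g' t| < ε

/-- Partial derivative of a Lagrangian `f(t,u,v)` in its second argument. -/
def pd2 (f : ℝ → ℝ → ℝ → ℝ) (t u v : ℝ) : ℝ := deriv (fun z => f t z v) u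

/-- Partial derivative of a Lagrangian `f(t,u,v)` in its third argument. -/
def pd3 (f : ℝ → ℝ → ℝ → ℝ) (t u v : ℝ) : ℝ := deriv (fun z => f t u z) v

/-- The integrand `t ↦ f(t, y(qt+ω), D_{q,ω}y(t))`. -/
def lagComp (q ω : ℝ) (f : ℝ → ℝ → ℝ → ℝ) (y : ℝ → ℝ) (t : ℝ) : ℝ :=
  f t (y (q * t + ω)) (hahnDeriv q ω y t)

/-- The variational functional `ℒ[y] = ∫_a^b f(t, y(qt+ω), D_{q,ω}y(t)) d_{q,ω}t`. -/
def varFunc (q ω a b : ℝ) (f : ℝ → ℝ → ℝ → ℝ) (y : ℝ → ℝ) : ℝ :=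
  jnIntegral q ω (lagComp q ω f y) a b

/-- Membership in the space `𝔼`: continuous at `ω₀`, `q,ω`-differentiable on `I`,
with `D_{q,ω}y` bounded on `[a,b]_{q,ω}` and continuous at `ω₀`. -/
def VarMemE (q ω : ℝ) (I : Set ℝ) (a b : ℝ) (y : ℝ → ℝ) : Prop :=
  ContinuousAt y (hahnOmega0 q ω) ∧
  (∀ t ∈ I, HahnDiffAt q ω y t) ∧
  (∃ M : ℝ, ∀ t ∈ qwInterval q ω a b, |hahnDeriv q ω y t| ≤ M) ∧
  ContinuousAt (hahnDeriv q ω y) (hahnOmega0 q ω)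

/-- The norm `‖y‖₁ = sup_{[a,b]_{q,ω}} |y| + sup_{[a,b]_{q,ω}} |D_{q,ω}y|`. -/
def varNorm1 (q ω a b : ℝ) (y : ℝ → ℝ) : ℝ :=
  sSup ((fun t => |y t|) '' qwInterval q ω a b) +
    sSup ((fun t => |hahnDeriv q ω y t|) '' qwInterval q ω a b)

/-- Admissible functions: members of `𝔼` with `y(a) = α`, `y(b) = β`. -/
def VarAdmissible (q ω : ℝ) (I : Set ℝ) (a b α β : ℝ) (y : ℝ → ℝ) : Prop :=
  VarMemE q ω I a b y ∧ y a = α ∧ y b = β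

/-- Admissible variations: members of `𝔼` vanishing at `a` and `b`. -/
def VarAdmissibleVar (q ω : ℝ) (I : Set ℝ) (a b : ℝ) (h : ℝ → ℝ) : Prop :=
  VarMemE q ω I a b h ∧ h a = 0 ∧ h b = 0

/-- Regularity of the Lagrangian: `(u,v) ↦ f(t,u,v)` is `C¹` for each `t`, and
the compositions with any `y ∈ 𝔼` (of `f`, `∂₂f`, `∂₃f`) are continuous at `ω₀`. -/
def LagrangianRegular (q ω : ℝ) (I : Set ℝ) (a b : ℝ) (f : ℝ → ℝ → ℝ → ℝ) : Prop :=
  (∀ t ∈ qwInterval q ω a b, ContDiff ℝ 1 (fun p : ℝ × ℝ => f t p.1 p.2)) ∧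
  ∀ y : ℝ → ℝ, VarMemE q ω I a b y →
    ContinuousAt (lagComp q ω f y) (hahnOmega0 q ω) ∧
    ContinuousAt (fun t => pd2 f t (y (q * t + ω)) (hahnDeriv q ω y t)) (hahnOmega0 q ω) ∧
    ContinuousAt (fun t => pd3 f t (y (q * t + ω)) (hahnDeriv q ω y t)) (hahnOmega0 q ω)

/-- `g(t,ε) = f(t, y(qt+ω) + ε h(qt+ω), D_{q,ω}y(t) + ε D_{q,ω}h(t))`. -/
def varied (q ω : ℝ) (f : ℝ → ℝ → ℝ → ℝ) (y h : ℝ → ℝ) (t ε : ℝ) : ℝ :=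
  f t (y (q * t + ω) + ε * h (q * t + ω)) (hahnDeriv q ω y t + ε * hahnDeriv q ω h t)

/-- The first-variation integrand
`∂₂f(t, y(qt+ω), D_{q,ω}y t) h(qt+ω) + ∂₃f(t, y(qt+ω), D_{q,ω}y t) D_{q,ω}h t`. -/
def varIntegrand (q ω : ℝ) (f : ℝ → ℝ → ℝ → ℝ) (y h : ℝ → ℝ) (t : ℝ) : ℝ :=
  pd2 f t (y (q * t + ω)) (hahnDeriv q ω y t) * h (q * t + ω) +
    pd3 f t (y (q * t + ω)) (hahnDeriv q ω y t) * hahnDeriv q ω h t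

/-- The standing regularity assumptions for the functional associated to `f`. -/
def StandingAssumptions (q ω : ℝ) (I : Set ℝ) (a b α β : ℝ)
    (f : ℝ → ℝ → ℝ → ℝ) : Prop :=
  ∀ y : ℝ → ℝ, VarAdmissible q ω I a b α β y →
    ∀ h : ℝ → ℝ, VarAdmissibleVar q ω I a b h →
      UnifDiffAt (varied q ω f y h) (qwClosedOrbit q ω a) 0 (varIntegrand q ω f y h) ∧
      UnifDiffAt (varied q ω f y h) (qwClosedOrbit q ω b) 0 (varIntegrand q ω f y h) ∧
      (∃ δ > 0, ∀ ε : ℝ, |ε| < δ →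
        JNConvergesAt q ω (lagComp q ω f (fun s => y s + ε * h s)) a ∧
        JNConvergesAt q ω (lagComp q ω f (fun s => y s + ε * h s)) b) ∧
      JNConvergesAt q ω (varIntegrand q ω f y h) a ∧
      JNConvergesAt q ω (varIntegrand q ω f y h) b

/-- The Hahn quantum Euler–Lagrange equation for `f` along `y` on `[a,b]_{q,ω}`. -/
def EulerLagrange (q ω a b : ℝ) (f : ℝ → ℝ → ℝ → ℝ) (y : ℝ → ℝ) : Prop :=
  ∀ t ∈ qwInterval q ω a b,
    hahnDeriv q ω (fun s => pd3 f s (y (q * s + ω)) (hahnDeriv q ω y s)) t =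
      pd2 f t (y (q * t + ω)) (hahnDeriv q ω y t)

lemma hahnDeriv_add_smul (q ω : ℝ) (y h : ℝ → ℝ) (ε t : ℝ)
    (hy : t = hahnOmega0 q ω → DifferentiableAt ℝ y t)
    (hh : t = hahnOmega0 q ω → DifferentiableAt ℝ h t) :
    hahnDeriv q ω (fun s => y s + ε * h s) t
      = hahnDeriv q ω y t + ε * hahnDeriv q ω h t := by
  unfold hahnDeriv
  by_cases ht : t = hahnOmega0 q ω
  · rw [if_pos ht, if_pos ht, if_pos ht]
    exact (((hy ht).hasDerivAt).add (((hh ht).hasDerivAt).const_mul ε)).deriv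
  · rw [if_neg ht, if_neg ht, if_neg ht]
    ring

lemma geom_partial_le (q : ℝ) (hq0 : 0 < q) (hq1 : q < 1) (n : ℕ) :
    ∑ k ∈ Finset.range n, q ^ k ≤ 1 / (1 - q) := by
  have h1 : (0:ℝ) < 1 - q := by linarith
  rw [geom_sum_eq hq1.ne n]
  have h2 : (q ^ n - 1) / (q - 1) = (1 - q ^ n) / (1 - q) := by
    rw [← neg_sub (1:ℝ) (q ^ n), ← neg_sub (1:ℝ) q, neg_div_neg_eq]
  rw [h2, div_le_div_iff_of_pos_right h1]
  have : (0:ℝ) ≤ q ^ n := by positivity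
  nlinarith

/-- Key analytic lemma: differentiating a weighted series term by term at a point,
given uniform differentiability of the terms. -/
lemma key_series_deriv (q : ℝ) (hq0 : 0 < q) (hq1 : q < 1)
    (F : ℝ → ℝ → ℝ) (F' : ℝ → ℝ) (S : Set ℝ) (p : ℕ → ℝ) (hp : ∀ k, p k ∈ S)
    (hud : UnifDiffAt F S 0 F')
    (δ₀ : ℝ) (hδ₀ : 0 < δ₀)
    (hconv : ∀ ε : ℝ, |ε| < δ₀ →
      ∃ L, Tendsto (fun n => ∑ k ∈ Finset.range n, q ^ k * F (p k) ε) atTop (𝓝 L))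
    (D : ℝ)
    (hconv' : Tendsto (fun n => ∑ k ∈ Finset.range n, q ^ k * F' (p k)) atTop (𝓝 D)) :
    HasDerivAt (fun ε => limUnder atTop (fun n => ∑ k ∈ Finset.range n, q ^ k * F (p k) ε))
      D 0 := by
  have h1q : (0:ℝ) < 1 - q := by linarith
  set L : ℝ → ℝ :=
    fun ε => limUnder atTop (fun n => ∑ k ∈ Finset.range n, q ^ k * F (p k) ε) with hL
  obtain ⟨L0, hL0⟩ := hconv 0 (by simpa using hδ₀)
  have hL0eq : L 0 = L0 := hL0.limUnder_eq
  rw [hasDerivAt_iff_tendsto_slope]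
  rw [Metric.tendsto_nhdsWithin_nhds]
  intro εtol hεtol
  set η : ℝ := εtol * (1 - q) / 2 with hη
  have hηpos : 0 < η := by positivity
  obtain ⟨δ₂, hδ₂, hδ₂p⟩ := hud.2 η hηpos
  refine ⟨min δ₀ δ₂, lt_min hδ₀ hδ₂, ?_⟩
  intro x hx hxd
  simp only [Set.mem_compl_iff, Set.mem_singleton_iff] at hx
  rw [Real.dist_eq, sub_zero] at hxd
  obtain ⟨Lx, hLx⟩ := hconv x (lt_of_lt_of_le hxd (min_le_left _ _))
  have hLxeq : L x = Lx := hLx.limUnder_eq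
  have hslope : slope L 0 x = (Lx - L0) / x := by
    rw [slope_def_field, hLxeq, hL0eq, sub_zero]
  rw [Real.dist_eq, hslope]
  have hxne : x ≠ 0 := hx
  have htend : Tendsto (fun n =>
      ((∑ k ∈ Finset.range n, q ^ k * F (p k) x)
        - (∑ k ∈ Finset.range n, q ^ k * F (p k) 0)) / x
        - ∑ k ∈ Finset.range n, q ^ k * F' (p k)) atTop (𝓝 ((Lx - L0) / x - D)) :=
    ((hLx.sub hL0).div_const x).sub hconv'
  have hbound : ∀ n : ℕ,
      |((∑ k ∈ Finset.range n, q ^ k * F (p k) x)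
        - (∑ k ∈ Finset.range n, q ^ k * F (p k) 0)) / x
        - ∑ k ∈ Finset.range n, q ^ k * F' (p k)| ≤ η / (1 - q) := by
    intro n
    have heq : ((∑ k ∈ Finset.range n, q ^ k * F (p k) x)
        - (∑ k ∈ Finset.range n, q ^ k * F (p k) 0)) / x
        - ∑ k ∈ Finset.range n, q ^ k * F' (p k)
        = ∑ k ∈ Finset.range n, q ^ k * ((F (p k) x - F (p k) 0) / x - F' (p k)) := by
      rw [← Finset.sum_sub_distrib, Finset.sum_div, ← Finset.sum_sub_distrib]
      refine Finset.sum_congr rfl (fun k _ => by ring)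
    rw [heq]
    calc |∑ k ∈ Finset.range n, q ^ k * ((F (p k) x - F (p k) 0) / x - F' (p k))|
        ≤ ∑ k ∈ Finset.range n, |q ^ k * ((F (p k) x - F (p k) 0) / x - F' (p k))| :=
          Finset.abs_sum_le_sum_abs _ _
      _ ≤ ∑ k ∈ Finset.range n, q ^ k * η := by
          refine Finset.sum_le_sum (fun k _ => ?_)
          rw [abs_mul, abs_pow, abs_of_pos hq0]
          refine mul_le_mul_of_nonneg_left ?_ (pow_nonneg hq0.le k)
          have h0x : 0 < |x - 0| := by simpa [sub_zero] using abs_pos.mpr hxne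
          have hxδ : |x - 0| < δ₂ := by
            simpa [sub_zero] using lt_of_lt_of_le hxd (min_le_right _ _)
          have := hδ₂p x h0x hxδ (p k) (hp k)
          rw [sub_zero] at this
          exact this.le
      _ = (∑ k ∈ Finset.range n, q ^ k) * η := by rw [← Finset.sum_mul]
      _ ≤ (1 / (1 - q)) * η :=
          mul_le_mul_of_nonneg_right (geom_partial_le q hq0 hq1 n) hηpos.le
      _ = η / (1 - q) := by ring
  have hle : |(Lx - L0) / x - D| ≤ η / (1 - q) :=
    le_of_tendsto htend.abs (Filter.Eventually.of_forall hbound)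
  have : η / (1 - q) = εtol / 2 := by rw [hη]; field_simp
  calc |(Lx - L0) / x - D| ≤ η / (1 - q) := hle
    _ < εtol := by rw [this]; linarith
theorem hahn_first_variation (q ω : ℝ) (hq0 : 0 < q) (hq1 : q < 1) (hω : 0 < ω)
    (I : Set ℝ) (hI : I.OrdConnected) (hmem : hahnOmega0 q ω ∈ I)
    (a b : ℝ) (ha : a ∈ I) (hb : b ∈ I) (hab : a < b) (α β : ℝ)
    (f : ℝ → ℝ → ℝ → ℝ)
    (hreg : LagrangianRegular q ω I a b f)
    (hstand : StandingAssumptions q ω I a b α β f)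
    (y : ℝ → ℝ) (hy : VarAdmissible q ω I a b α β y)
    (h : ℝ → ℝ) (hh : VarAdmissibleVar q ω I a b h) :
    HasDerivAt (fun ε => varFunc q ω a b f (fun s => y s + ε * h s))
      (jnIntegral q ω (varIntegrand q ω f y h) a b) 0 := by
  obtain ⟨ud_a, ud_b, ⟨δ₀, hδ₀, hδconv⟩, ⟨Da, hDa⟩, ⟨Db, hDb⟩⟩ := hstand y hy h hh
  have hdy : ∀ t, t = hahnOmega0 q ω → DifferentiableAt ℝ y t := by
    intro t ht; subst ht; exact hy.1.2.1 _ hmem rfl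
  have hdh : ∀ t, t = hahnOmega0 q ω → DifferentiableAt ℝ h t := by
    intro t ht; subst ht; exact hh.1.2.1 _ hmem rfl
  have hfun : ∀ ε : ℝ, lagComp q ω f (fun s => y s + ε * h s)
      = fun t => varied q ω f y h t ε := by
    intro ε; funext t
    simp only [lagComp, varied]
    rw [hahnDeriv_add_smul q ω y h ε t (hdy t) (hdh t)]
  have hconva : ∀ ε : ℝ, |ε| < δ₀ → ∃ L,
      Tendsto (fun n => ∑ k ∈ Finset.range n,
        q ^ k * varied q ω f y h (jnPoint q ω a k) ε) atTop (𝓝 L) := by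
    intro ε hε
    obtain ⟨L, hL⟩ := (hδconv ε hε).1
    rw [hfun ε] at hL
    exact ⟨L, hL⟩
  have hconvb : ∀ ε : ℝ, |ε| < δ₀ → ∃ L,
      Tendsto (fun n => ∑ k ∈ Finset.range n,
        q ^ k * varied q ω f y h (jnPoint q ω b k) ε) atTop (𝓝 L) := by
    intro ε hε
    obtain ⟨L, hL⟩ := (hδconv ε hε).2
    rw [hfun ε] at hL
    exact ⟨L, hL⟩
  have key_a := key_series_deriv q hq0 hq1 (varied q ω f y h) (varIntegrand q ω f y h)
    (qwClosedOrbit q ω a) (jnPoint q ω a)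
    (fun k => Set.mem_union_left _ (Set.mem_range_self k)) ud_a δ₀ hδ₀ hconva Da hDa
  have key_b := key_series_deriv q hq0 hq1 (varied q ω f y h) (varIntegrand q ω f y h)
    (qwClosedOrbit q ω b) (jnPoint q ω b)
    (fun k => Set.mem_union_left _ (Set.mem_range_self k)) ud_b δ₀ hδ₀ hconvb Db hDb
  have main := (key_b.const_mul (b * (1 - q) - ω)).sub (key_a.const_mul (a * (1 - q) - ω))
  have hfun2 : (fun ε => varFunc q ω a b f (fun s => y s + ε * h s))
      = fun ε => (b * (1 - q) - ω) * limUnder atTop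
          (fun n => ∑ k ∈ Finset.range n, q ^ k * varied q ω f y h (jnPoint q ω b k) ε)
        - (a * (1 - q) - ω) * limUnder atTop
          (fun n => ∑ k ∈ Finset.range n, q ^ k * varied q ω f y h (jnPoint q ω a k) ε) := by
    funext ε
    simp only [varFunc, jnIntegral, jnSum, hfun ε]
    rfl
  have hDone : jnIntegral q ω (varIntegrand q ω f y h) a b
      = (b * (1 - q) - ω) * Db - (a * (1 - q) - ω) * Da := by
    simp only [jnIntegral, jnSum, hDb.limUnder_eq, hDa.limUnder_eq]
  rw [hfun2, hDone]
  exact main
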